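/- EnumGreedy_1 is not a (1 − e^{−1})-approximation: For every real N ≥ 8, consider the MSK instance with E = {1, 2, 3}, w(1) = w(2) = N, w(3) = 1, W = 2N, and f(S) = N·|S ∩ {1,2}| + 2·|S ∩ {3}| (a modular, hence monotone submodular, non-negative function). The optimal feasible value is f({1,2}) = 2N, yet for every G ⊆ E with |G| ≤ 1 and w(G) ≤ W and every greedy execution on (E, f_G, w, W − w(G)) with output A, it holds that f(G ∪ A) ≤ N + 2 < (1 − e^{−1})·2N. -/

import Mathlib

open Finset

variable {α : Type*}

/-- A set function `f` is submodular on ground set `E`. -/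
def SubmodularOn [DecidableEq α] (E : Finset α) (f : Finset α → ℝ) : Prop :=
  ∀ A B : Finset α, A ⊆ B → B ⊆ E → ∀ e ∈ E, e ∉ B →
    f (insert e B) - f B ≤ f (insert e A) - f A

/-- A set function `f` is monotone on ground set `E`. -/
def MonotoneOnSets (E : Finset α) (f : Finset α → ℝ) : Prop :=
  ∀ S T : Finset α, S ⊆ T → T ⊆ E → f S ≤ f T

/-- A set function `f` is non-negative on ground set `E`. -/
def NonnegOn (E : Finset α) (f : Finset α → ℝ) : Prop :=
  ∀ S : Finset α, S ⊆ E → 0 ≤ f S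

/-- Total weight of a set. -/
def wt (w : α → ℝ) (S : Finset α) : ℝ := ∑ e ∈ S, w e

/-- Marginal value `f_A(S) = f(A ∪ S) - f(A)`. -/
def marginal [DecidableEq α] (f : Finset α → ℝ) (A S : Finset α) : ℝ := f (A ∪ S) - f A

/-- A greedy execution on the MSK instance `(E, f, w, W)`: an ordering `e_1, …, e_n`
of the elements of `E` (here `order`, 0-indexed) together with sets
`sol 0 = ∅ ⊆ sol 1 ⊆ … ⊆ sol n` such that at every step the considered element maximizes
the marginal density among the remaining elements, and it is added iff it fits. -/
structure GreedyExec [DecidableEq α] (E : Finset α) (f : Finset α → ℝ) (w : α → ℝ)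
    (W : ℝ) where
  order : List α
  nodup : order.Nodup
  ground : order.toFinset = E
  sol : ℕ → Finset α
  sol_zero : sol 0 = ∅
  greedy_max : ∀ (i : ℕ) (hi : i < order.length), ∀ e ∈ order.drop i,
    marginal f (sol i) {e} / w e ≤
      marginal f (sol i) {order.get ⟨i, hi⟩} / w (order.get ⟨i, hi⟩)
  step_add : ∀ (i : ℕ) (hi : i < order.length),
    wt w (sol i) + w (order.get ⟨i, hi⟩) ≤ W →
      sol (i + 1) = insert (order.get ⟨i, hi⟩) (sol i)
  step_skip : ∀ (i : ℕ) (hi : i < order.length),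
    W < wt w (sol i) + w (order.get ⟨i, hi⟩) → sol (i + 1) = sol i

/-- The output of a greedy execution. -/
def GreedyExec.out [DecidableEq α] {E : Finset α} {f : Finset α → ℝ} {w : α → ℝ} {W : ℝ}
    (g : GreedyExec E f w W) : Finset α := g.sol g.order.length

namespace GreedyExec

variable [DecidableEq α] {E : Finset α} {f : Finset α → ℝ} {w : α → ℝ} {W : ℝ}

lemma sol_succ_supset (g : GreedyExec E f w W) (i : ℕ) (hi : i < g.order.length) :
    g.sol i ⊆ g.sol (i + 1) := by
  rcases le_or_gt (wt w (g.sol i) + w (g.order.get ⟨i, hi⟩)) W with h | h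
  · rw [g.step_add i hi h]; exact Finset.subset_insert _ _
  · rw [g.step_skip i hi h]

lemma sol_subset_sol (g : GreedyExec E f w W) {i j : ℕ} (hij : i ≤ j)
    (hj : j ≤ g.order.length) : g.sol i ⊆ g.sol j := by
  induction j with
  | zero =>
    obtain rfl : i = 0 := Nat.le_zero.mp hij
    exact Finset.Subset.refl _
  | succ j ih =>
    rcases Nat.lt_or_ge i (j + 1) with h | h
    · exact (ih (Nat.lt_succ_iff.mp h) (le_of_lt hj)).trans
        (g.sol_succ_supset j hj)
    · obtain rfl : i = j + 1 := le_antisymm hij h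
      exact Finset.Subset.refl _

lemma sol_subset_E (g : GreedyExec E f w W) :
    ∀ i ≤ g.order.length, g.sol i ⊆ E := by
  intro i
  induction i with
  | zero => intro _; rw [g.sol_zero]; exact Finset.empty_subset _
  | succ i ih =>
    intro hi
    have hi' : i < g.order.length := hi
    have hmem : g.order.get ⟨i, hi'⟩ ∈ E := by
      have : g.order.get ⟨i, hi'⟩ ∈ g.order.toFinset :=
        List.mem_toFinset.mpr (g.order.get_mem _)
      rwa [g.ground] at this
    rcases le_or_gt (wt w (g.sol i) + w (g.order.get ⟨i, hi'⟩)) W with h | h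
    · rw [g.step_add i hi' h]
      exact Finset.insert_subset hmem (ih (le_of_lt hi'))
    · rw [g.step_skip i hi' h]
      exact ih (le_of_lt hi')

lemma wt_sol_le (g : GreedyExec E f w W) (hW : 0 ≤ W)
    (hw : ∀ e ∈ E, 0 ≤ w e) : ∀ i ≤ g.order.length, wt w (g.sol i) ≤ W := by
  intro i
  induction i with
  | zero => intro _; rw [g.sol_zero]; simpa [wt] using hW
  | succ i ih =>
    intro hi
    have hi' : i < g.order.length := hi
    rcases le_or_gt (wt w (g.sol i) + w (g.order.get ⟨i, hi'⟩)) W with h | h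
    · rw [g.step_add i hi' h]
      by_cases hmem : g.order.get ⟨i, hi'⟩ ∈ g.sol i
      · rw [Finset.insert_eq_self.mpr hmem]; exact ih (le_of_lt hi')
      · rw [wt, Finset.sum_insert hmem]
        calc w (g.order.get ⟨i, hi'⟩) + ∑ e ∈ g.sol i, w e
            = wt w (g.sol i) + w (g.order.get ⟨i, hi'⟩) := by rw [wt]; ring
          _ ≤ W := h
    · rw [g.step_skip i hi' h]
      exact ih (le_of_lt hi')

end GreedyExec

lemma wt_le_of_subset {w : α → ℝ} (S T : Finset α) (hST : S ⊆ T)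
    (hw : ∀ e ∈ T, 0 ≤ w e) : wt w S ≤ wt w T :=
  Finset.sum_le_sum_of_subset_of_nonneg hST (fun e he _ => hw e he)

set_option maxHeartbeats 1000000

theorem enum_greedy_one_fails (N : ℝ) (hN : 8 ≤ N)
    (E : Finset ℕ) (hE : E = {1, 2, 3})
    (w : ℕ → ℝ) (hw1 : w 1 = N) (hw2 : w 2 = N) (hw3 : w 3 = 1)
    (f : Finset ℕ → ℝ)
    (hf : ∀ S : Finset ℕ,
      f S = N * ((S ∩ {1, 2}).card : ℝ) + 2 * ((S ∩ {3}).card : ℝ)) :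
    f {1, 2} = 2 * N ∧
    IsGreatest {v : ℝ | ∃ S, S ⊆ E ∧ wt w S ≤ 2 * N ∧ f S = v} (2 * N) ∧
    (∀ G ⊆ E, G.card ≤ 1 → wt w G ≤ 2 * N →
      ∀ g : GreedyExec E (fun S => f (G ∪ S) - f G) w (2 * N - wt w G),
        f (G ∪ g.out) ≤ N + 2) ∧
    N + 2 < (1 - Real.exp (-1)) * (2 * N) := by
  subst hE
  have hNpos : (0 : ℝ) < N := by linarith
  have hf12 : f {1, 2} = 2 * N := by
    rw [hf, show ({1,2} : Finset ℕ) ∩ {1,2} = {1,2} from by decide,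
      show ({1,2} : Finset ℕ) ∩ {3} = ∅ from by decide]
    simp; ring
  -- the f-values on all relevant sets
  have hfv0 : f ∅ = 0 := by simp [hf]
  have hfv1 : f {1} = N := by
    rw [hf, show ({1} : Finset ℕ) ∩ {1,2} = {1} from by decide,
      show ({1} : Finset ℕ) ∩ {3} = ∅ from by decide]; simp
  have hfv2 : f {2} = N := by
    rw [hf, show ({2} : Finset ℕ) ∩ {1,2} = {2} from by decide,
      show ({2} : Finset ℕ) ∩ {3} = ∅ from by decide]; simp
  have hfv3 : f {3} = 2 := by
    rw [hf, show ({3} : Finset ℕ) ∩ {1,2} = ∅ from by decide,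
      show ({3} : Finset ℕ) ∩ {3} = {3} from by decide]; simp
  have hfv13 : f {1,3} = N + 2 := by
    rw [hf, show ({1,3} : Finset ℕ) ∩ {1,2} = {1} from by decide,
      show ({1,3} : Finset ℕ) ∩ {3} = {3} from by decide]; simp
  have hfv23 : f {2,3} = N + 2 := by
    rw [hf, show ({2,3} : Finset ℕ) ∩ {1,2} = {2} from by decide,
      show ({2,3} : Finset ℕ) ∩ {3} = {3} from by decide]; simp
  -- key upper bound
  have key : ∀ S : Finset ℕ, (1 ∉ S ∨ 2 ∉ S) → f S ≤ N + 2 := by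
    intro S hS
    rw [hf S]
    have h3 : ((S ∩ {3}).card : ℝ) ≤ 1 := by
      have := Finset.card_le_card (Finset.inter_subset_right (s₁ := S) (s₂ := ({3} : Finset ℕ)))
      simp only [Finset.card_singleton] at this
      exact_mod_cast this
    have h12 : ((S ∩ {1,2}).card : ℝ) ≤ 1 := by
      rcases hS with h | h
      · have hsub : S ∩ {1,2} ⊆ {2} := by
          intro x hx
          simp only [Finset.mem_inter, Finset.mem_insert, Finset.mem_singleton] at hx
          rcases hx.2 with rfl | rfl
          · exact absurd hx.1 h
          · exact Finset.mem_singleton_self _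
        have := Finset.card_le_card hsub
        simp only [Finset.card_singleton] at this
        exact_mod_cast this
      · have hsub : S ∩ {1,2} ⊆ {1} := by
          intro x hx
          simp only [Finset.mem_inter, Finset.mem_insert, Finset.mem_singleton] at hx
          rcases hx.2 with rfl | rfl
          · exact Finset.mem_singleton_self _
          · exact absurd hx.1 h
        have := Finset.card_le_card hsub
        simp only [Finset.card_singleton] at this
        exact_mod_cast this
    have hn3 : (0 : ℝ) ≤ ((S ∩ {3}).card : ℝ) := by positivity
    have hn12 : (0 : ℝ) ≤ ((S ∩ {1,2}).card : ℝ) := by positivity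
    nlinarith
  have hwnn : ∀ e ∈ ({1,2,3} : Finset ℕ), 0 ≤ w e := by
    intro e he
    fin_cases he <;> simp [hw1, hw2, hw3] <;> linarith
  refine ⟨hf12, ⟨⟨{1,2}, by simp, ?_, hf12⟩, ?_⟩, ?_, ?_⟩
  · rw [show wt w {1,2} = w 1 + w 2 from by simp [wt], hw1, hw2]; linarith
  · rintro v ⟨S, hSE, hwS, rfl⟩
    have hp : S ∈ ({1,2,3} : Finset ℕ).powerset := Finset.mem_powerset.mpr hSE
    fin_cases hp <;>
      simp_all [wt, hf] <;> nlinarith [hwS, hN]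
  · -- the greedy part
    intro G hGE hGcard hGwt g
    have hlen : g.order.length = 3 := by
      have h := List.toFinset_card_of_nodup g.nodup
      rw [g.ground] at h
      have h3 : ({1,2,3} : Finset ℕ).card = 3 := by decide
      omega
    have h0 : 0 < g.order.length := by omega
    have h3ord : (3 : ℕ) ∈ g.order := by
      rw [← List.mem_toFinset, g.ground]; decide
    have he0E : g.order.get ⟨0, h0⟩ = 1 ∨ g.order.get ⟨0, h0⟩ = 2 ∨
        g.order.get ⟨0, h0⟩ = 3 := by
      have : g.order.get ⟨0, h0⟩ ∈ g.order.toFinset :=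
        List.mem_toFinset.mpr (g.order.get_mem _)
      rw [g.ground] at this
      simpa using this
    have hwtout : wt w g.out ≤ 2 * N - wt w G :=
      g.wt_sol_le (by linarith) hwnn _ (le_refl _)
    have houtE : g.out ⊆ ({1,2,3} : Finset ℕ) := g.sol_subset_E _ (le_refl _)
    have hwnn' : ∀ e ∈ g.out, 0 ≤ w e := fun e he => hwnn e (houtE he)
    -- case analysis on G
    have hG4 : G = ∅ ∨ G = {1} ∨ G = {2} ∨ G = {3} := by
      have hp : G ∈ ({1,2,3} : Finset ℕ).powerset := Finset.mem_powerset.mpr hGE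
      fin_cases hp <;> revert hGcard <;> decide
    have hmax := g.greedy_max 0 h0 3 (by simpa using h3ord)
    rw [g.sol_zero] at hmax
    simp only [marginal, Finset.empty_union, Finset.union_empty, hw3] at hmax
    rcases hG4 with rfl | rfl | rfl | rfl
    · -- G = ∅
      have hWG : wt w (∅ : Finset ℕ) = 0 := by simp [wt]
      simp only [Finset.empty_union, hfv0, hfv3] at hmax
      have he0 : g.order.get ⟨0, h0⟩ = 3 := by
        rcases he0E with h | h | h
        · exfalso; rw [h, hfv1, hw1] at hmax
          rw [div_le_div_iff₀ (by norm_num) hNpos] at hmax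
          nlinarith
        · exfalso; rw [h, hfv2, hw2] at hmax
          rw [div_le_div_iff₀ (by norm_num) hNpos] at hmax
          nlinarith
        · exact h
      have hsol1 : g.sol 1 = {3} := by
        have := g.step_add 0 h0 (by
          rw [g.sol_zero, he0, hw3, hWG]; simp [wt]; linarith)
        rw [this, he0, g.sol_zero]; rfl
      have h3out : (3 : ℕ) ∈ g.out := by
        have hs : g.sol 1 ⊆ g.out := g.sol_subset_sol (by omega) (le_refl _)
        exact hs (by rw [hsol1]; exact Finset.mem_singleton_self 3)
      have hnb : (1 : ℕ) ∉ g.out ∨ (2 : ℕ) ∉ g.out := by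
        by_contra hc
        push_neg at hc
        have hsub : ({1,2,3} : Finset ℕ) ⊆ g.out := by
          intro x hx
          simp only [Finset.mem_insert, Finset.mem_singleton] at hx
          rcases hx with rfl | rfl | rfl
          exacts [hc.1, hc.2, h3out]
        have := wt_le_of_subset _ _ hsub hwnn'
        rw [show wt w ({1,2,3} : Finset ℕ) = w 1 + (w 2 + w 3) from by
          simp [wt, Finset.sum_insert], hw1, hw2, hw3] at this
        linarith
      refine key _ ?_
      simpa using hnb
    · -- G = {1}
      have hWG : wt w ({1} : Finset ℕ) = N := by simp [wt, hw1]
      simp only [show ({1} : Finset ℕ) ∪ {3} = {1,3} from by decide, hfv13, hfv1] at hmax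
      have he0 : g.order.get ⟨0, h0⟩ = 3 := by
        rcases he0E with h | h | h
        · exfalso
          rw [h, show ({1} : Finset ℕ) ∪ {1} = {1} from by decide, hfv1, hw1] at hmax
          rw [div_le_div_iff₀ (by norm_num) hNpos] at hmax
          nlinarith
        · exfalso
          rw [h, show ({1} : Finset ℕ) ∪ {2} = {1,2} from by decide, hf12, hw2] at hmax
          rw [div_le_div_iff₀ (by norm_num) hNpos] at hmax
          nlinarith
        · exact h
      have hsol1 : g.sol 1 = {3} := by
        have := g.step_add 0 h0 (by
          rw [g.sol_zero, he0, hw3, hWG]; simp [wt]; linarith)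
        rw [this, he0, g.sol_zero]; rfl
      have h3out : (3 : ℕ) ∈ g.out := by
        have hs : g.sol 1 ⊆ g.out := g.sol_subset_sol (by omega) (le_refl _)
        exact hs (by rw [hsol1]; exact Finset.mem_singleton_self 3)
      refine key _ (Or.inr ?_)
      intro h2
      have h2out : (2 : ℕ) ∈ g.out := by simpa using h2
      have hsub : ({2,3} : Finset ℕ) ⊆ g.out := by
        intro x hx
        simp only [Finset.mem_insert, Finset.mem_singleton] at hx
        rcases hx with rfl | rfl
        exacts [h2out, h3out]
      have := wt_le_of_subset _ _ hsub hwnn'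
      rw [show wt w ({2,3} : Finset ℕ) = w 2 + w 3 from by
        simp [wt, Finset.sum_insert], hw2, hw3] at this
      linarith
    · -- G = {2}
      have hWG : wt w ({2} : Finset ℕ) = N := by simp [wt, hw2]
      simp only [show ({2} : Finset ℕ) ∪ {3} = {2,3} from by decide, hfv23, hfv2] at hmax
      have he0 : g.order.get ⟨0, h0⟩ = 3 := by
        rcases he0E with h | h | h
        · exfalso
          rw [h, show ({2} : Finset ℕ) ∪ {1} = {1,2} from by decide, hf12, hw1] at hmax
          rw [div_le_div_iff₀ (by norm_num) hNpos] at hmax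
          nlinarith
        · exfalso
          rw [h, show ({2} : Finset ℕ) ∪ {2} = {2} from by decide, hfv2, hw2] at hmax
          rw [div_le_div_iff₀ (by norm_num) hNpos] at hmax
          nlinarith
        · exact h
      have hsol1 : g.sol 1 = {3} := by
        have := g.step_add 0 h0 (by
          rw [g.sol_zero, he0, hw3, hWG]; simp [wt]; linarith)
        rw [this, he0, g.sol_zero]; rfl
      have h3out : (3 : ℕ) ∈ g.out := by
        have hs : g.sol 1 ⊆ g.out := g.sol_subset_sol (by omega) (le_refl _)
        exact hs (by rw [hsol1]; exact Finset.mem_singleton_self 3)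
      refine key _ (Or.inl ?_)
      intro h1
      have h1out : (1 : ℕ) ∈ g.out := by simpa using h1
      have hsub : ({1,3} : Finset ℕ) ⊆ g.out := by
        intro x hx
        simp only [Finset.mem_insert, Finset.mem_singleton] at hx
        rcases hx with rfl | rfl
        exacts [h1out, h3out]
      have := wt_le_of_subset _ _ hsub hwnn'
      rw [show wt w ({1,3} : Finset ℕ) = w 1 + w 3 from by
        simp [wt, Finset.sum_insert], hw1, hw3] at this
      linarith
    · -- G = {3}
      have hWG : wt w ({3} : Finset ℕ) = 1 := by simp [wt, hw3]
      have hnb : (1 : ℕ) ∉ g.out ∨ (2 : ℕ) ∉ g.out := by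
        by_contra hc
        push_neg at hc
        have hsub : ({1,2} : Finset ℕ) ⊆ g.out := by
          intro x hx
          simp only [Finset.mem_insert, Finset.mem_singleton] at hx
          rcases hx with rfl | rfl
          exacts [hc.1, hc.2]
        have := wt_le_of_subset _ _ hsub hwnn'
        rw [show wt w ({1,2} : Finset ℕ) = w 1 + w 2 from by
          simp [wt, Finset.sum_insert], hw1, hw2] at this
        linarith
      refine key _ ?_
      rcases hnb with h | h
      · exact Or.inl (by simpa using h)
      · exact Or.inr (by simpa using h)
  · -- numeric inequality
    have hexp : Real.exp (-1) * Real.exp 1 = 1 := by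
      rw [← Real.exp_add]; norm_num
    have hx : Real.exp (-1) < 3 / 8 := by
      nlinarith [hexp, mul_pos (Real.exp_pos (-1))
        (show (0 : ℝ) < Real.exp 1 - 8/3 by nlinarith [Real.exp_one_gt_d9])]
    nlinarith [mul_pos (show (0 : ℝ) < 3/8 - Real.exp (-1) by linarith) hNpos]
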